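/- Let X be a real Hilbert space and Y a real normed vector space, let F : X → Y be Fréchet differentiable on X with derivative F', let f†, f₀ ∈ X, L ≥ 0 and β ≥ 0 with βL < 1, and assume: (i) the Lipschitz condition ‖F'(x) − F'(f†)‖ ≤ L ‖x − f†‖ for all x ∈ X (operator norm); (ii) the variational source condition −⟨h, f† − f₀⟩ ≤ β ‖F'(f†) h‖ for all h ∈ X. Let δ ≥ 0, C ≥ 0, τ ≥ 0, g^δ ∈ Y with ‖g^δ − F(f†)‖ ≤ δ, and let f ∈ X satisfy ‖f − f₀‖² ≤ ‖f† − f₀‖² + Cδ and the discrepancy bound ‖F(f) − g^δ‖ ≤ τδ. Then ‖f − f†‖² ≤ ((C + 2β(τ + 1)) / (1 − βL)) δ; in particular ‖f − f†‖ = O(√δ). -/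

import Mathlib

open Set

private lemma taylor_aux
    {X Y : Type*} [NormedAddCommGroup X] [NormedSpace ℝ X]
    [NormedAddCommGroup Y] [NormedSpace ℝ Y]
    (F : X → Y) (F' : X → X →L[ℝ] Y)
    (hF : ∀ x : X, HasFDerivAt F (F' x) x)
    (a b : X) (L : ℝ)
    (hLip : ∀ x : X, ‖F' x - F' a‖ ≤ L * ‖x - a‖) :
    ‖F b - F a - F' a (b - a)‖ ≤ L / 2 * ‖b - a‖ ^ 2 := by
  set v := b - a with hv
  set φ : ℝ → Y := fun t => F (a + t • v) - F a - t • (F' a v) with hφ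
  have hd : ∀ t : ℝ, HasDerivAt φ (F' (a + t • v) v - F' a v) t := by
    intro t
    have h1 : HasDerivAt (fun t : ℝ => a + t • v) v t := by
      simpa using ((hasDerivAt_id t).smul_const v).const_add a
    have h2 : HasDerivAt (fun t : ℝ => F (a + t • v)) (F' (a + t • v) v) t := by
      exact (hF (a + t • v)).comp_hasDerivAt t h1
    have h3 : HasDerivAt (fun t : ℝ => t • (F' a v)) (F' a v) t := by
      simpa using (hasDerivAt_id t).smul_const (F' a v)
    exact (h2.sub_const (F a)).sub h3
  have key : ∀ ⦃x⦄, x ∈ Icc (0:ℝ) 1 → ‖φ x‖ ≤ L * ‖v‖ ^ 2 / 2 * x ^ 2 := by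
    have hcont : ContinuousOn φ (Icc (0:ℝ) 1) :=
      fun t _ => (hd t).continuousAt.continuousWithinAt
    have hderiv : ∀ t ∈ Ico (0:ℝ) 1,
        HasDerivWithinAt φ (F' (a + t • v) v - F' a v) (Ici t) t :=
      fun t _ => (hd t).hasDerivWithinAt
    have h0 : ‖φ 0‖ ≤ L * ‖v‖ ^ 2 / 2 * (0:ℝ) ^ 2 := by simp [φ]
    have hB : ∀ t : ℝ, HasDerivAt (fun s => L * ‖v‖ ^ 2 / 2 * s ^ 2) (L * ‖v‖ ^ 2 * t) t := by
      intro t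
      have : HasDerivAt (fun s : ℝ => L * ‖v‖ ^ 2 / 2 * s ^ 2) (L * ‖v‖ ^ 2 / 2 * ((2 : ℕ) * t ^ (2 - 1) * 1)) t :=
        ((hasDerivAt_id t).pow 2).const_mul (L * ‖v‖ ^ 2 / 2)
      convert this using 1
      simp; ring
    have hbound : ∀ t ∈ Ico (0:ℝ) 1,
        ‖F' (a + t • v) v - F' a v‖ ≤ L * ‖v‖ ^ 2 * t := by
      intro t ht
      have h1 : ‖F' (a + t • v) v - F' a v‖ ≤ ‖F' (a + t • v) - F' a‖ * ‖v‖ := by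
        simpa using (F' (a + t • v) - F' a).le_opNorm v
      have h2 : ‖F' (a + t • v) - F' a‖ ≤ L * (t * ‖v‖) := by
        have := hLip (a + t • v)
        simpa [norm_smul, abs_of_nonneg ht.1] using this
      calc ‖F' (a + t • v) v - F' a v‖ ≤ L * (t * ‖v‖) * ‖v‖ :=
            h1.trans (mul_le_mul_of_nonneg_right h2 (norm_nonneg v))
        _ = L * ‖v‖ ^ 2 * t := by ring
    exact image_norm_le_of_norm_deriv_right_le_deriv_boundary hcont hderiv h0 hB hbound
  have := key (by norm_num : (1:ℝ) ∈ Icc (0:ℝ) 1)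
  simpa [φ, hv, show a + v = b by simp [hv]] using this.trans_eq (by ring)

/-- Convergence rate `‖f - f†‖ = O(√δ)` at the discrepancy-principle stopping index for
regularized Newton iterations, under a Lipschitz condition on `F'` at `f†` and a
variational source condition. -/
theorem newton_discrepancy_convergence_rate
    {X Y : Type*} [NormedAddCommGroup X] [InnerProductSpace ℝ X] [CompleteSpace X]
    [NormedAddCommGroup Y] [NormedSpace ℝ Y]
    (F : X → Y) (F' : X → X →L[ℝ] Y)
    (hF : ∀ x : X, HasFDerivAt F (F' x) x)
    (fdag f₀ : X) (L β : ℝ) (hL : 0 ≤ L) (hβ : 0 ≤ β) (hβL : β * L < 1)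
    (hLip : ∀ x : X, ‖F' x - F' fdag‖ ≤ L * ‖x - fdag‖)
    (hvsc : ∀ h : X, -(inner ℝ h (fdag - f₀) : ℝ) ≤ β * ‖F' fdag h‖)
    (δ C τ : ℝ) (hδ : 0 ≤ δ) (hC : 0 ≤ C) (hτ : 0 ≤ τ)
    (gδ : Y) (hgδ : ‖gδ - F fdag‖ ≤ δ) (f : X)
    (hf : ‖f - f₀‖ ^ 2 ≤ ‖fdag - f₀‖ ^ 2 + C * δ)
    (hdisc : ‖F f - gδ‖ ≤ τ * δ) :
    ‖f - fdag‖ ^ 2 ≤ (C + 2 * β * (τ + 1)) / (1 - β * L) * δ := by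
  set v := f - fdag with hv
  -- Taylor estimate
  have taylor : ‖F f - F fdag - F' fdag v‖ ≤ L / 2 * ‖v‖ ^ 2 :=
    taylor_aux F F' hF fdag f L hLip
  -- data bound
  have hdata : ‖F f - F fdag‖ ≤ (τ + 1) * δ := by
    calc ‖F f - F fdag‖ = ‖(F f - gδ) + (gδ - F fdag)‖ := by rw [sub_add_sub_cancel]
      _ ≤ ‖F f - gδ‖ + ‖gδ - F fdag‖ := norm_add_le _ _
      _ ≤ τ * δ + δ := add_le_add hdisc hgδ
      _ = (τ + 1) * δ := by ring
  have hFv : ‖F' fdag v‖ ≤ (τ + 1) * δ + L / 2 * ‖v‖ ^ 2 := by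
    calc ‖F' fdag v‖ = ‖(F f - F fdag) - (F f - F fdag - F' fdag v)‖ := by congr 1; abel
      _ ≤ ‖F f - F fdag‖ + ‖F f - F fdag - F' fdag v‖ := norm_sub_le _ _
      _ ≤ (τ + 1) * δ + L / 2 * ‖v‖ ^ 2 := add_le_add hdata taylor
  -- inner product identity
  have hid : ‖f - f₀‖ ^ 2 = ‖v‖ ^ 2 + 2 * (inner ℝ v (fdag - f₀) : ℝ) + ‖fdag - f₀‖ ^ 2 := by
    have : f - f₀ = v + (fdag - f₀) := by rw [hv]; abel
    rw [this, norm_add_sq_real]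
  have hkey : ‖v‖ ^ 2 ≤ C * δ + 2 * (β * ‖F' fdag v‖) := by
    have h1 : ‖v‖ ^ 2 ≤ C * δ + 2 * (-(inner ℝ v (fdag - f₀) : ℝ)) := by nlinarith [hf, hid]
    have h2 := hvsc v
    linarith
  have hnn : (0:ℝ) ≤ ‖v‖ ^ 2 := sq_nonneg _
  have h3 : ‖v‖ ^ 2 ≤ C * δ + 2 * β * ((τ + 1) * δ) + β * L * ‖v‖ ^ 2 := by
    nlinarith [mul_le_mul_of_nonneg_left hFv hβ]
  have h4 : (1 - β * L) * ‖v‖ ^ 2 ≤ (C + 2 * β * (τ + 1)) * δ := by nlinarith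
  have hpos : 0 < 1 - β * L := by linarith
  rw [div_mul_eq_mul_div, le_div_iff₀ hpos]
  linarith [h4]
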